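/- Under the shared clustering-perturbation setup, suppose additionally that there is C > 0 such that for every k ∈ [K] and every i ∈ D_k, (1/M_k)·( Σ_{i₁∈D_k} d_{i₁}^{(k)} ) / d_i^{(k)} ≤ C. Then for every k ∈ [K] and every i ∈ D_k, (1/M_k)·( Σ_{i₁∈D_k} d̂_{i₁}^{(k)} ) / d̂_i^{(k)} ≤ C + A₈·ε, where A₈ = 4c/m². -/

import Mathlib

lemma gauss_key (v : ℝ) (hv : 0 ≤ v) :
    v * Real.exp (-(v^2)/2) ≤ Real.exp (-(1:ℝ)/2) := by
  have h1 : v ≤ Real.exp ((v^2-1)/2) := by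
    have := Real.add_one_le_exp ((v^2-1)/2)
    nlinarith [sq_nonneg (v-1)]
  calc v * Real.exp (-(v^2)/2)
      ≤ Real.exp ((v^2-1)/2) * Real.exp (-(v^2)/2) :=
        mul_le_mul_of_nonneg_right h1 (Real.exp_pos _).le
    _ = Real.exp (-(1:ℝ)/2) := by rw [← Real.exp_add]; ring_nf

lemma gauss_lipschitz (σ : ℝ) (hσ : 0 < σ) (x y : ℝ) :
    |Real.exp (-y^2/(2*σ^2)) - Real.exp (-x^2/(2*σ^2))|
      ≤ (1/(σ * Real.sqrt (Real.exp 1))) * |y - x| := by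
  have hsq : Real.sqrt (Real.exp 1) = Real.exp (1/2) := by
    have h : Real.exp 1 = Real.exp (1/2) * Real.exp (1/2) := by
      rw [← Real.exp_add]; norm_num
    rw [h, Real.sqrt_mul_self (Real.exp_pos _).le]
  set f : ℝ → ℝ := fun t => Real.exp (-t^2/(2*σ^2)) with hf
  set f' : ℝ → ℝ := fun t => Real.exp (-t^2/(2*σ^2)) * (-t/σ^2) with hf'
  have hder : ∀ t : ℝ, HasDerivAt f (f' t) t := by
    intro t
    have h2 : HasDerivAt (fun t : ℝ => t^2) (2*t) t := by
      simpa using hasDerivAt_pow 2 t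
    have h3 := (h2.neg).div_const (2*σ^2)
    have h1 : HasDerivAt (fun t : ℝ => -t^2/(2*σ^2)) (-t/σ^2) t := by
      exact h3.congr_deriv (by ring)
    exact (Real.hasDerivAt_exp _).comp t h1
  have hbound : ∀ t : ℝ, ‖f' t‖ ≤ 1/(σ * Real.sqrt (Real.exp 1)) := by
    intro t
    have hk := gauss_key (|t|/σ) (by positivity)
    have he : (-((|t|/σ)^2)/2) = -t^2/(2*σ^2) := by
      rw [div_pow, sq_abs]; ring
    rw [he] at hk
    rw [hsq, Real.norm_eq_abs, hf']
    have habs : |Real.exp (-t^2/(2*σ^2)) * (-t/σ^2)|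
        = (|t|/σ) * Real.exp (-t^2/(2*σ^2)) / σ := by
      rw [abs_mul, abs_of_pos (Real.exp_pos _), abs_div, abs_neg]
      rw [abs_of_pos (show (0:ℝ) < σ^2 by positivity)]
      field_simp
    rw [habs]
    calc (|t|/σ) * Real.exp (-t^2/(2*σ^2)) / σ
        ≤ Real.exp (-(1:ℝ)/2) / σ := by gcongr
      _ = 1/(σ * Real.exp (1/2)) := by
          rw [show (-(1:ℝ)/2) = -(1/2) by ring, Real.exp_neg]
          field_simp
  have := Convex.norm_image_sub_le_of_norm_hasDerivWithin_le
    (f := f) (f' := f') (s := Set.univ)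
    (fun t _ => (hder t).hasDerivWithinAt)
    (fun t _ => hbound t) convex_univ (Set.mem_univ x) (Set.mem_univ y)
  simpa [Real.norm_eq_abs] using this


lemma main_algebra (n a ah S Sh m ε c C : ℝ)
    (hn2 : 2 ≤ n) (hm : 0 < m) (hc : 0 < c) (hε : 0 < ε)
    (hce : c * ε < m / 2)
    (ha_lb : (n-1)*m ≤ a) (ha_ub : a ≤ n-1)
    (hdiff : |ah - a| ≤ (n-1)*(c*ε))
    (hS0 : 0 ≤ S) (hS_ub : S ≤ n*(n-1))
    (hSh_ub : Sh ≤ S + n*((n-1)*(c*ε)))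
    (hC : 1/n * S / a ≤ C) :
    1/n * Sh / ah ≤ C + (4*c/m^2)*ε := by
  have hn1 : (0:ℝ) < n - 1 := by linarith
  have hcε0 : (0:ℝ) ≤ c * ε := by positivity
  have hapos : 0 < a := by nlinarith
  have hdiff' := abs_le.mp hdiff
  have hah_lb : (n - 1) * (m / 2) ≤ ah := by nlinarith
  have hahpos : 0 < ah := by nlinarith
  have hnpos : (0:ℝ) < n := by linarith
  have hpoly : Sh * a ≤ S * ah + (4 * c / m ^ 2) * ε * (n * a * ah) := by
    have e1 : Sh * a ≤ (S + n * ((n - 1) * (c * ε))) * a :=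
      mul_le_mul_of_nonneg_right hSh_ub hapos.le
    have e2 : S * (a - (n - 1) * (c * ε)) ≤ S * ah :=
      mul_le_mul_of_nonneg_left (by linarith [hdiff'.1]) hS0
    have e4 : (n * ((n - 1) * (c * ε))) * a ≤ (n * ((n - 1) * (c * ε))) * (n - 1) :=
      mul_le_mul_of_nonneg_left ha_ub (by positivity)
    have hSa_ub : S * ((n-1)*(c*ε)) ≤ n*(n-1) * ((n-1)*(c*ε)) :=
      mul_le_mul_of_nonneg_right hS_ub (by positivity)
    have hK : 2 * (c * ε) * (n * (n - 1) ^ 2) ≤ (4 * c / m ^ 2) * ε * (n * a * ah) := by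
      have h1 : n * ((n - 1) * m) * ((n - 1) * (m / 2)) ≤ n * a * ah := by
        have hx : (0:ℝ) ≤ (n - 1) * (m / 2) := by positivity
        have hy : (0:ℝ) ≤ n * a := by positivity
        have := mul_le_mul (mul_le_mul_of_nonneg_left ha_lb hnpos.le) hah_lb hx hy
        linarith
      have h2 : (4 * c / m ^ 2) * ε * (n * ((n - 1) * m) * ((n - 1) * (m / 2)))
          = 2 * (c * ε) * (n * (n - 1) ^ 2) := by
        field_simp; ring
      calc 2 * (c * ε) * (n * (n - 1) ^ 2)
          = (4 * c / m ^ 2) * ε * (n * ((n - 1) * m) * ((n - 1) * (m / 2))) := h2.symm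
        _ ≤ (4 * c / m ^ 2) * ε * (n * a * ah) :=
            mul_le_mul_of_nonneg_left h1 (by positivity)
    nlinarith [e1, e2, e4, hK, hSa_ub]
  calc 1 / n * Sh / ah
      = Sh * a / (n * a * ah) := by field_simp
    _ ≤ (S * ah + (4 * c / m ^ 2) * ε * (n * a * ah)) / (n * a * ah) := by
        have hpos : (0:ℝ) < n * a * ah := by positivity
        exact div_le_div_of_nonneg_right hpoly hpos.le
    _ = 1 / n * S / a + (4 * c / m ^ 2) * ε := by field_simp
    _ ≤ C + (4 * c / m ^ 2) * ε := by linarith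

/-- SHARED SETUP + STATEMENT. -/
theorem degree_ratio_perturbation_bound
    (M K : ℕ) (hM : 2 ≤ M) (hK : 1 ≤ K)
    -- the clusters: a partition of [M] into K clusters, each of size ≥ 2
    (D : Fin K → Finset (Fin M))
    (hDdisj : ∀ k l : Fin K, k ≠ l → Disjoint (D k) (D l))
    (hDcover : ∀ i : Fin M, ∃ k : Fin K, i ∈ D k)
    (hDcard : ∀ k : Fin K, 2 ≤ (D k).card)
    -- true and estimated distances: nonnegative, symmetric, zero diagonal
    (d dh : Fin M → Fin M → ℝ)
    (hd0 : ∀ i j, 0 ≤ d i j) (hdh0 : ∀ i j, 0 ≤ dh i j)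
    (hdsymm : ∀ i j, d i j = d j i) (hdhsymm : ∀ i j, dh i j = dh j i)
    (hddiag : ∀ i, d i i = 0) (hdhdiag : ∀ i, dh i i = 0)
    -- affinity matrices
    (σa : ℝ) (hσa : 0 < σa)
    (A Ah : Fin M → Fin M → ℝ)
    (hA : ∀ i j, A i j = if i = j then 0 else Real.exp (-(d i j) ^ 2 / (2 * σa ^ 2)))
    (hAh : ∀ i j, Ah i j = if i = j then 0 else Real.exp (-(dh i j) ^ 2 / (2 * σa ^ 2)))
    -- cluster degrees
    (deg degh : Fin K → Fin M → ℝ)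
    (hdeg : ∀ k i, deg k i = ∑ j ∈ D k, A i j)
    (hdegh : ∀ k i, degh k i = ∑ j ∈ D k, Ah i j)
    -- m = min intra-cluster true affinity, c = Lipschitz constant of the kernel
    (m c : ℝ)
    (hc : c = 1 / (σa * Real.sqrt (Real.exp 1)))
    (hm_le : ∀ k : Fin K, ∀ i ∈ D k, ∀ j ∈ D k, i ≠ j → m ≤ A i j)
    (hm_attained : ∃ k : Fin K, ∃ i ∈ D k, ∃ j ∈ D k, i ≠ j ∧ m = A i j)
    -- the estimation error event
    (ε : ℝ) (hε : 0 < ε) (hεlt : ε < m / (2 * c))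
    (hclose : ∀ i j : Fin M, i ≠ j → |dh i j - d i j| < ε)
    -- Assumption 4 for the true quantities
    (C : ℝ) (hC : 0 < C)
    (hassump : ∀ k : Fin K, ∀ i ∈ D k,
      (1 / ((D k).card : ℝ)) * (∑ i₁ ∈ D k, deg k i₁) / deg k i ≤ C) :
    ∀ k : Fin K, ∀ i ∈ D k,
      (1 / ((D k).card : ℝ)) * (∑ i₁ ∈ D k, degh k i₁) / degh k i
        ≤ C + (4 * c / m ^ 2) * ε := by
  have hcpos : 0 < c := by
    rw [hc]
    have : 0 < Real.sqrt (Real.exp 1) := Real.sqrt_pos.mpr (Real.exp_pos 1)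
    positivity
  have hmpos : 0 < m := by
    obtain ⟨k0, i0, hi0, j0, hj0, hne, hmeq⟩ := hm_attained
    rw [hmeq, hA, if_neg hne]
    exact Real.exp_pos _
  have hcε : c * ε < m / 2 := by
    have h := mul_lt_mul_of_pos_left hεlt hcpos
    have h2 : c * (m / (2 * c)) = m / 2 := by field_simp
    linarith
  have hA1 : ∀ i j : Fin M, A i j ≤ 1 := by
    intro i j
    rw [hA]
    split
    · norm_num
    · exact Real.exp_le_one_iff.mpr (by
        apply div_nonpos_of_nonpos_of_nonneg
        · simpa using sq_nonneg (d i j)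
        · positivity)
  have hA0 : ∀ i j : Fin M, 0 ≤ A i j := by
    intro i j
    rw [hA]
    split
    · exact le_refl _
    · exact (Real.exp_pos _).le
  have hAdiff : ∀ i j : Fin M, i ≠ j → |Ah i j - A i j| ≤ c * ε := by
    intro i j hij
    rw [hA, hAh, if_neg hij, if_neg hij]
    calc |Real.exp (-dh i j ^ 2 / (2 * σa ^ 2)) - Real.exp (-d i j ^ 2 / (2 * σa ^ 2))|
        ≤ (1 / (σa * Real.sqrt (Real.exp 1))) * |dh i j - d i j| :=
          gauss_lipschitz σa hσa (d i j) (dh i j)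
      _ = c * |dh i j - d i j| := by rw [hc]
      _ ≤ c * ε := mul_le_mul_of_nonneg_left (hclose i j hij).le hcpos.le
  intro k i hi
  have hcard1 : 1 ≤ (D k).card := by have := hDcard k; omega
  have hn2 : (2:ℝ) ≤ ((D k).card : ℝ) := by exact_mod_cast hDcard k
  have hcast : (((D k).card - 1 : ℕ) : ℝ) = ((D k).card : ℝ) - 1 := by
    rw [Nat.cast_sub hcard1]; norm_num
  have hdegub : ∀ i' ∈ D k, deg k i' ≤ ((D k).card : ℝ) - 1 := by
    intro i' hi'
    rw [hdeg, ← Finset.add_sum_erase _ _ hi', hA, if_pos rfl, zero_add]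
    calc ∑ j ∈ (D k).erase i', A i' j ≤ ∑ j ∈ (D k).erase i', (1:ℝ) :=
          Finset.sum_le_sum fun j _ => hA1 i' j
      _ = ((D k).card : ℝ) - 1 := by
          rw [Finset.sum_const, Finset.card_erase_of_mem hi', nsmul_eq_mul, hcast, mul_one]
  have hdeglb : ∀ i' ∈ D k, (((D k).card : ℝ) - 1) * m ≤ deg k i' := by
    intro i' hi'
    rw [hdeg, ← Finset.add_sum_erase _ _ hi', hA, if_pos rfl, zero_add]
    calc (((D k).card : ℝ) - 1) * m = ∑ j ∈ (D k).erase i', m := by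
          rw [Finset.sum_const, Finset.card_erase_of_mem hi', nsmul_eq_mul, hcast]
      _ ≤ ∑ j ∈ (D k).erase i', A i' j := by
          apply Finset.sum_le_sum
          intro j hj
          exact hm_le k i' hi' j (Finset.mem_of_mem_erase hj)
            (Ne.symm (Finset.ne_of_mem_erase hj))
  have hdegdiff : ∀ i' ∈ D k,
      |degh k i' - deg k i'| ≤ (((D k).card : ℝ) - 1) * (c * ε) := by
    intro i' hi'
    rw [hdegh, hdeg, ← Finset.sum_sub_distrib]
    calc |∑ j ∈ D k, (Ah i' j - A i' j)| ≤ ∑ j ∈ D k, |Ah i' j - A i' j| :=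
          Finset.abs_sum_le_sum_abs _ _
      _ = ∑ j ∈ (D k).erase i', |Ah i' j - A i' j| := by
          rw [← Finset.add_sum_erase _ _ hi', hA, hAh, if_pos rfl, if_pos rfl]
          simp
      _ ≤ ∑ j ∈ (D k).erase i', (c * ε) :=
          Finset.sum_le_sum fun j hj =>
            hAdiff i' j (Ne.symm (Finset.ne_of_mem_erase hj))
      _ = (((D k).card : ℝ) - 1) * (c * ε) := by
          rw [Finset.sum_const, Finset.card_erase_of_mem hi', nsmul_eq_mul, hcast]
  have hS_nonneg : 0 ≤ ∑ i₁ ∈ D k, deg k i₁ := by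
    apply Finset.sum_nonneg
    intro i₁ hi₁
    rw [hdeg]
    exact Finset.sum_nonneg fun j _ => hA0 i₁ j
  have hS_ub : ∑ i₁ ∈ D k, deg k i₁ ≤ ((D k).card : ℝ) * (((D k).card : ℝ) - 1) := by
    calc ∑ i₁ ∈ D k, deg k i₁ ≤ ∑ i₁ ∈ D k, (((D k).card : ℝ) - 1) :=
          Finset.sum_le_sum hdegub
      _ = ((D k).card : ℝ) * (((D k).card : ℝ) - 1) := by
          rw [Finset.sum_const, nsmul_eq_mul]
  have hSh_ub : ∑ i₁ ∈ D k, degh k i₁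
      ≤ (∑ i₁ ∈ D k, deg k i₁) + ((D k).card : ℝ) * ((((D k).card : ℝ) - 1) * (c * ε)) := by
    have h : (∑ i₁ ∈ D k, degh k i₁) - (∑ i₁ ∈ D k, deg k i₁)
        ≤ ((D k).card : ℝ) * ((((D k).card : ℝ) - 1) * (c * ε)) := by
      rw [← Finset.sum_sub_distrib]
      calc ∑ i₁ ∈ D k, (degh k i₁ - deg k i₁)
          ≤ ∑ i₁ ∈ D k, ((((D k).card : ℝ) - 1) * (c * ε)) :=
            Finset.sum_le_sum fun i₁ hi₁ => (abs_le.mp (hdegdiff i₁ hi₁)).2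
        _ = ((D k).card : ℝ) * ((((D k).card : ℝ) - 1) * (c * ε)) := by
            rw [Finset.sum_const, nsmul_eq_mul]
    linarith
  exact main_algebra ((D k).card : ℝ) (deg k i) (degh k i)
    (∑ i₁ ∈ D k, deg k i₁) (∑ i₁ ∈ D k, degh k i₁) m ε c C
    hn2 hmpos hcpos hε hcε (hdeglb i hi) (hdegub i hi) (hdegdiff i hi)
    hS_nonneg hS_ub hSh_ub (hassump k i hi)
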